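/- Let A = [a_1,...,a_m] be an n×m matrix of full row rank and define Φ_A(t_1,...,t_m) = ln det(A e^T A^t), where T = diag(t_1,...,t_m). Then Φ_A is a convex function on ℝ^m. -/

import Mathlib

open Matrix Real

section Aux

variable {R : Type*} [CommRing R] {n m : ℕ}

lemma expand_det (A : Matrix (Fin n) (Fin m) R) (w : Fin m → R) :
    (A * Matrix.diagonal w * Aᵀ).det
      = ∑ f : Fin n → Fin m, (∏ i, w (f i)) * ((∏ i, A i (f i)) * (A.submatrix id f).det) := by
  have entry : ∀ p q, (A * Matrix.diagonal w * Aᵀ) p q = ∑ j, A p j * w j * A q j := by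
    intro p q
    rw [Matrix.mul_apply]
    congr 1; ext j
    rw [Matrix.mul_diagonal, Matrix.transpose_apply]
  rw [Matrix.det_apply']
  calc ∑ σ : Equiv.Perm (Fin n), (Equiv.Perm.sign σ : R) * ∏ i, (A * Matrix.diagonal w * Aᵀ) (σ i) i
      = ∑ σ : Equiv.Perm (Fin n), ∑ f : Fin n → Fin m,
          (Equiv.Perm.sign σ : R) * ∏ i, (A (σ i) (f i) * w (f i) * A i (f i)) := by
        refine Finset.sum_congr rfl fun σ _ => ?_
        rw [← Finset.mul_sum]
        congr 1
        simp_rw [entry]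
        rw [Finset.prod_univ_sum, Fintype.piFinset_univ]
    _ = ∑ f : Fin n → Fin m, (∏ i, w (f i)) * ((∏ i, A i (f i)) * (A.submatrix id f).det) := by
        rw [Finset.sum_comm]
        refine Finset.sum_congr rfl fun f _ => ?_
        rw [Matrix.det_apply']
        simp_rw [Finset.prod_mul_distrib, Matrix.submatrix_apply, id_eq]
        rw [Finset.mul_sum, Finset.mul_sum]
        refine Finset.sum_congr rfl fun σ _ => ?_
        ring

lemma cauchy_binet (A : Matrix (Fin n) (Fin m) R) (w : Fin m → R) :
    (A * Matrix.diagonal w * Aᵀ).det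
      = ∑ g ∈ Finset.univ.filter (fun g : Fin n → Fin m => StrictMono g),
          (A.submatrix id g).det ^ 2 * ∏ i, w (g i) := by
  rw [expand_det]
  have h0 : ∀ f : Fin n → Fin m, ¬ Function.Injective f → (A.submatrix id f).det = 0 := by
    intro f hf
    rw [Function.not_injective_iff] at hf
    obtain ⟨i, j, hfij, hij⟩ := hf
    exact Matrix.det_zero_of_column_eq hij (fun k => by simp [hfij])
  have hfilter :
      ∑ f : Fin n → Fin m, (∏ i, w (f i)) * ((∏ i, A i (f i)) * (A.submatrix id f).det)
        = ∑ f ∈ Finset.univ.filter (fun f : Fin n → Fin m => Function.Injective f),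
            (∏ i, w (f i)) * ((∏ i, A i (f i)) * (A.submatrix id f).det) := by
    symm
    refine Finset.sum_filter_of_ne fun f _ hne => ?_
    by_contra hinj
    rw [h0 f hinj] at hne
    simp at hne
  rw [hfilter]
  have hbij :
      ∑ f ∈ Finset.univ.filter (fun f : Fin n → Fin m => Function.Injective f),
            (∏ i, w (f i)) * ((∏ i, A i (f i)) * (A.submatrix id f).det)
        = ∑ p ∈ (Finset.univ.filter (fun g : Fin n → Fin m => StrictMono g)) ×ˢ
              (Finset.univ : Finset (Equiv.Perm (Fin n))),
            (∏ i, w (p.1 (p.2 i))) * ((∏ i, A i (p.1 (p.2 i)))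
              * (A.submatrix id (p.1 ∘ p.2)).det) := by
    refine Finset.sum_bij' (fun f _ => (f ∘ Tuple.sort f, (Tuple.sort f)⁻¹))
      (fun p _ => p.1 ∘ p.2) ?_ ?_ ?_ ?_ ?_
    · intro f hf
      simp only [Finset.mem_filter, Finset.mem_univ, true_and] at hf ⊢
      rw [Finset.mem_product]
      refine ⟨?_, Finset.mem_univ _⟩
      simp only [Finset.mem_filter, Finset.mem_univ, true_and]
      exact (Tuple.monotone_sort f).strictMono_of_injective
        (hf.comp (Tuple.sort f).injective)
    · intro p hp
      rw [Finset.mem_product] at hp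
      obtain ⟨hp1, -⟩ := hp
      simp only [Finset.mem_filter, Finset.mem_univ, true_and] at hp1 ⊢
      exact hp1.injective.comp p.2.injective
    · intro f hf
      funext i
      simp [Function.comp]
    · intro p hp
      rw [Finset.mem_product] at hp
      obtain ⟨hp1, -⟩ := hp
      simp only [Finset.mem_filter, Finset.mem_univ, true_and] at hp1
      obtain ⟨g, σ⟩ := p
      have hsort : Tuple.sort (g ∘ σ) = σ⁻¹ := by
        have hinj : Function.Injective (g ∘ σ) := hp1.injective.comp σ.injective
        have h1 : Monotone ((g ∘ ⇑σ) ∘ ⇑(σ⁻¹)) := by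
          have : (g ∘ ⇑σ) ∘ ⇑(σ⁻¹) = g := by
            funext i; simp
          rw [this]; exact hp1.monotone
        have h2 := Tuple.monotone_sort (g ∘ ⇑σ)
        have := Tuple.unique_monotone h2 h1
        have hfun : ⇑(Tuple.sort (g ∘ ⇑σ)) = ⇑(σ⁻¹) := by
          funext i
          exact hinj (congrFun this i)
        apply Equiv.coe_fn_injective
        exact hfun
      simp only [hsort]
      refine Prod.ext ?_ ?_
      · show (g ∘ ⇑σ) ∘ ⇑(σ⁻¹) = g
        funext i; simp
      · simp
    · intro f hf
      have h4 : ∀ x, (f ∘ ⇑(Tuple.sort f)) ((Tuple.sort f)⁻¹ x) = f x := by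
        intro x; simp
      have h5 : (f ∘ ⇑(Tuple.sort f)) ∘ ⇑(Tuple.sort f)⁻¹ = f := funext h4
      simp only [h4, h5]
  rw [hbij, Finset.sum_product]
  refine Finset.sum_congr rfl fun g hg => ?_
  simp only [Finset.mem_filter, Finset.mem_univ, true_and] at hg
  have h1 : ∀ σ : Equiv.Perm (Fin n), ∏ i, w (g (σ i)) = ∏ i, w (g i) :=
    fun σ => Equiv.prod_comp σ (fun i => w (g i))
  have h2 : ∀ σ : Equiv.Perm (Fin n),
      (A.submatrix id (g ∘ σ)).det = (Equiv.Perm.sign σ : ℤ) * (A.submatrix id g).det := by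
    intro σ
    have : A.submatrix id (g ∘ ⇑σ) = (A.submatrix id g).submatrix id ⇑σ := rfl
    rw [this, Matrix.det_permute']
  have h3 : ∑ σ : Equiv.Perm (Fin n), ((Equiv.Perm.sign σ : ℤ) : R) * ∏ i, A i (g (σ i))
      = (A.submatrix id g).det := by
    rw [← Matrix.det_transpose, Matrix.det_apply']
    refine Finset.sum_congr rfl fun σ _ => ?_
    simp [Matrix.transpose_apply]
  calc ∑ σ : Equiv.Perm (Fin n),
        (∏ i, w (g (σ i))) * ((∏ i, A i (g (σ i))) * (A.submatrix id (g ∘ ⇑σ)).det)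
      = (∏ i, w (g i)) * ((A.submatrix id g).det
          * ∑ σ : Equiv.Perm (Fin n), ((Equiv.Perm.sign σ : ℤ) : R) * ∏ i, A i (g (σ i))) := by
        rw [Finset.mul_sum, Finset.mul_sum]
        refine Finset.sum_congr rfl fun σ _ => ?_
        rw [h1, h2]
        ring
    _ = (A.submatrix id g).det ^ 2 * ∏ i, w (g i) := by
        rw [h3]; ring

lemma det_pos_of_rank (A : Matrix (Fin n) (Fin m) ℝ) (hA : A.rank = n)
    (x : Fin m → ℝ) (hx : ∀ j, 0 < x j) :
    0 < (A * Matrix.diagonal x * Aᵀ).det := by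
  -- surjectivity of mulVecLin A
  have hsurj : Function.Surjective A.mulVecLin := by
    rw [← LinearMap.range_eq_top]
    apply Submodule.eq_top_of_finrank_eq
    rw [← Matrix.rank, hA, Module.finrank_fintype_fun_eq_card, Fintype.card_fin]
  have hvec : ∀ v : Fin n → ℝ, v ≠ 0 → Aᵀ *ᵥ v ≠ 0 := by
    intro v hv h
    apply hv
    obtain ⟨u, hu⟩ := hsurj v
    have h2 : ∀ u : Fin m → ℝ, (Aᵀ *ᵥ v) ⬝ᵥ u = v ⬝ᵥ (A *ᵥ u) := by
      intro u
      rw [Matrix.mulVec_transpose, ← Matrix.dotProduct_mulVec]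
    have hu' : A *ᵥ u = v := by rw [← Matrix.mulVecLin_apply, hu]
    have h3 : v ⬝ᵥ (A *ᵥ u) = 0 := by
      rw [← h2, h]; simp
    rw [hu'] at h3
    exact dotProduct_self_eq_zero.mp h3
  have hpd : (A * Matrix.diagonal x * Aᵀ).PosDef := by
    rw [Matrix.posDef_iff_dotProduct_mulVec]
    constructor
    · show (A * Matrix.diagonal x * Aᵀ)ᴴ = _
      rw [Matrix.conjTranspose_eq_transpose_of_trivial, Matrix.transpose_mul,
        Matrix.transpose_mul, Matrix.transpose_transpose, Matrix.diagonal_transpose,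
        Matrix.mul_assoc]
    · intro v hv
      have hsv : star v = v := by simp
      rw [hsv, ← Matrix.mulVec_mulVec, ← Matrix.mulVec_mulVec,
        Matrix.dotProduct_mulVec v A, ← Matrix.mulVec_transpose]
      set u := Aᵀ *ᵥ v with hu
      have hval : ∀ j, (Matrix.diagonal x *ᵥ u) j = x j * u j := by
        intro j; simp [Matrix.mulVec_diagonal]
      have : u ⬝ᵥ (Matrix.diagonal x *ᵥ u) = ∑ j, x j * (u j * u j) := by
        rw [dotProduct]
        refine Finset.sum_congr rfl fun j _ => ?_
        rw [hval]; ring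
      rw [this]
      have hune : u ≠ 0 := hvec v hv
      have ⟨j0, hj0⟩ : ∃ j, u j ≠ 0 := by
        by_contra h
        push_neg at h
        exact hune (funext h)
      refine Finset.sum_pos' (fun j _ => ?_) ⟨j0, Finset.mem_univ _, ?_⟩
      · exact mul_nonneg (hx j).le (mul_self_nonneg _)
      · exact mul_pos (hx j0) (mul_self_pos.mpr hj0)
  exact hpd.det_pos

lemma convexOn_log_sum_exp {ι κ : Type*} [Fintype κ] (S : Finset ι) (c : ι → ℝ)
    (hc : ∀ g ∈ S, 0 ≤ c g) (L : ι → (κ → ℝ) → ℝ)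
    (hL : ∀ g ∈ S, IsLinearMap ℝ (L g))
    (hpos : ∀ t : κ → ℝ, 0 < ∑ g ∈ S, c g * Real.exp (L g t)) :
    ConvexOn ℝ Set.univ (fun t : κ → ℝ => Real.log (∑ g ∈ S, c g * Real.exp (L g t))) := by
  refine ⟨convex_univ, fun t _ s _ a b ha hb hab => ?_⟩
  rcases eq_or_lt_of_le ha with rfl | ha'
  · have hb1 : b = 1 := by linarith
    simp [hb1]
  rcases eq_or_lt_of_le hb with rfl | hb'
  · have ha1 : a = 1 := by linarith
    simp [ha1]
  have ha1 : a < 1 := by linarith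
  have hb1 : b < 1 := by linarith
  have hpq : Real.HolderConjugate a⁻¹ b⁻¹ := by
    rw [Real.holderConjugate_iff]
    constructor
    · exact (one_lt_inv₀ ha' |>.mpr ha1 : 1 < a⁻¹)
    · rw [inv_inv, inv_inv]; exact hab
  have key : ∀ g ∈ S,
      c g * Real.exp (L g (a • t + b • s))
        = (c g * Real.exp (L g t)) ^ a * (c g * Real.exp (L g s)) ^ b := by
    intro g hg
    have hlin : L g (a • t + b • s) = a * L g t + b * L g s := by
      rw [(hL g hg).map_add, (hL g hg).map_smul, (hL g hg).map_smul]
      simp [smul_eq_mul]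
    rw [hlin, Real.mul_rpow (hc g hg) (Real.exp_pos _).le,
      Real.mul_rpow (hc g hg) (Real.exp_pos _).le,
      ← Real.exp_mul, ← Real.exp_mul, mul_comm (L g t) a, mul_comm (L g s) b]
    have hcc : c g ^ a * c g ^ b = c g := by
      rw [← Real.rpow_add' (hc g hg) (by rw [hab]; norm_num), hab, Real.rpow_one]
    calc c g * Real.exp (a * L g t + b * L g s)
        = (c g ^ a * c g ^ b) * (Real.exp (a * L g t) * Real.exp (b * L g s)) := by
          rw [hcc, Real.exp_add]
      _ = c g ^ a * Real.exp (a * L g t) * (c g ^ b * Real.exp (b * L g s)) := by ring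
  have holder := Real.inner_le_Lp_mul_Lq_of_nonneg (s := S)
    (f := fun g => (c g * Real.exp (L g t)) ^ a)
    (g := fun g => (c g * Real.exp (L g s)) ^ b) hpq
    (fun g hg => Real.rpow_nonneg (mul_nonneg (hc g hg) (Real.exp_pos _).le) _)
    (fun g hg => Real.rpow_nonneg (mul_nonneg (hc g hg) (Real.exp_pos _).le) _)
  have hL1 : ∑ g ∈ S, (c g * Real.exp (L g t)) ^ a * (c g * Real.exp (L g s)) ^ b
      = ∑ g ∈ S, c g * Real.exp (L g (a • t + b • s)) :=
    (Finset.sum_congr rfl key).symm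
  have hR1 : ∑ g ∈ S, ((c g * Real.exp (L g t)) ^ a) ^ (a⁻¹)
      = ∑ g ∈ S, c g * Real.exp (L g t) := by
    refine Finset.sum_congr rfl fun g hg => ?_
    rw [← Real.rpow_mul (mul_nonneg (hc g hg) (Real.exp_pos _).le),
      mul_inv_cancel₀ ha'.ne', Real.rpow_one]
  have hR2 : ∑ g ∈ S, ((c g * Real.exp (L g s)) ^ b) ^ (b⁻¹)
      = ∑ g ∈ S, c g * Real.exp (L g s) := by
    refine Finset.sum_congr rfl fun g hg => ?_
    rw [← Real.rpow_mul (mul_nonneg (hc g hg) (Real.exp_pos _).le),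
      mul_inv_cancel₀ hb'.ne', Real.rpow_one]
  rw [hL1, hR1, hR2, one_div, one_div, inv_inv, inv_inv] at holder
  simp only [smul_eq_mul]
  calc Real.log (∑ g ∈ S, c g * Real.exp (L g (a • t + b • s)))
      ≤ Real.log ((∑ g ∈ S, c g * Real.exp (L g t)) ^ a
          * (∑ g ∈ S, c g * Real.exp (L g s)) ^ b) :=
        Real.log_le_log (hpos _) holder
    _ = a * Real.log (∑ g ∈ S, c g * Real.exp (L g t))
        + b * Real.log (∑ g ∈ S, c g * Real.exp (L g s)) := by
        rw [Real.log_mul (Real.rpow_pos_of_pos (hpos t) a).ne'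
            (Real.rpow_pos_of_pos (hpos s) b).ne',
          Real.log_rpow (hpos t), Real.log_rpow (hpos s)]

end Aux

/-- Convexity of `Φ_A(t) = ln det (A e^T Aᵗ)` for an `n × m` matrix `A` of full row
rank, where `T = diag(t_1, …, t_m)`. -/

theorem phi_A_convex {n m : ℕ}
    (A : Matrix (Fin n) (Fin m) ℝ) (hA : A.rank = n) :
    ConvexOn ℝ Set.univ (fun t : Fin m → ℝ =>
      Real.log ((A * Matrix.diagonal (fun j => Real.exp (t j)) * Aᵀ).det)) := by
  classical
  set S : Finset (Fin n → Fin m) :=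
    Finset.univ.filter (fun g : Fin n → Fin m => StrictMono g) with hS
  have key : ∀ t : Fin m → ℝ,
      (A * Matrix.diagonal (fun j => Real.exp (t j)) * Aᵀ).det
        = ∑ g ∈ S, (A.submatrix id g).det ^ 2 * Real.exp (∑ i, t (g i)) := by
    intro t
    rw [cauchy_binet]
    exact Finset.sum_congr rfl fun g _ => by rw [Real.exp_sum]
  have hpos : ∀ t : Fin m → ℝ,
      0 < ∑ g ∈ S, (A.submatrix id g).det ^ 2 * Real.exp (∑ i, t (g i)) := by
    intro t
    rw [← key]
    exact det_pos_of_rank A hA _ (fun j => Real.exp_pos _)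
  have hmain := convexOn_log_sum_exp S (fun g => (A.submatrix id g).det ^ 2)
    (fun g _ => sq_nonneg _) (fun g t => ∑ i, t (g i))
    (fun g _ => ⟨fun x y => by simp [Finset.sum_add_distrib],
      fun c x => by simp [Finset.mul_sum]⟩) hpos
  have heq : (fun t : Fin m → ℝ =>
      Real.log ((A * Matrix.diagonal (fun j => Real.exp (t j)) * Aᵀ).det))
      = fun t : Fin m → ℝ =>
        Real.log (∑ g ∈ S, (A.submatrix id g).det ^ 2 * Real.exp (∑ i, t (g i))) :=
    funext fun t => by rw [key]
  rw [heq]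
  exact hmain
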